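/- Suppose g : ℝ → [0,1] satisfies g(x) ≥ 1 - F(x - y) for all x (survival probability in the best-case shifted model) and h(x) = 1 - F(x + y) (worst case). If r is L-Lipschitz and nonnegative, then the optimal constant-policy value under survival function h is within 2yL/(1-γ) of the optimal constant-policy value under survival function g, where the constant-policy value with survival function q is sup_x r(x) q(x)/(1-γ). -/

import Mathlib

/-- Small-noise robustness: with noise in `[-y, y]`, the optimal constant-policy
value in the best-case shifted model (survival probability `1 - F(x - y)`) is
within `2yL/(1-γ)` of that in the worst-case model (survival probability
`1 - F(x + y)`), when `r` is `L`-Lipschitz and nonnegative. -/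
theorem small_noise_constant_policy_gap
    (F : ℝ → ℝ) (hFmono : Monotone F) (hF01 : ∀ z, 0 ≤ F z ∧ F z ≤ 1)
    (r : ℝ → ℝ) (hr : ∀ z, 0 ≤ r z) (B : ℝ) (hrB : ∀ z, r z ≤ B)
    (L : ℝ) (hL : 0 ≤ L) (hLip : ∀ a b, |r a - r b| ≤ L * |a - b|)
    (γ : ℝ) (hγ : γ ∈ Set.Ioo (0 : ℝ) 1)
    (y : ℝ) (hy : 0 ≤ y) :
    (⨆ x : ℝ, r x * (1 - F (x - y))) / (1 - γ)
      - (⨆ x : ℝ, r x * (1 - F (x + y))) / (1 - γ)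
      ≤ 2 * y * L / (1 - γ) := by
  have hγ1 : 0 < 1 - γ := by linarith [hγ.2]
  rw [div_sub_div_same, div_le_div_iff_of_pos_right hγ1, sub_le_iff_le_add]
  have hbdd : BddAbove (Set.range fun x : ℝ => r x * (1 - F (x + y))) := by
    refine ⟨B, ?_⟩
    rintro _ ⟨x, rfl⟩
    have h1 : 1 - F (x + y) ≤ 1 := by linarith [(hF01 (x + y)).1]
    calc r x * (1 - F (x + y)) ≤ r x * 1 := by
          apply mul_le_mul_of_nonneg_left h1 (hr x)
      _ = r x := mul_one _
      _ ≤ B := hrB x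
  apply ciSup_le
  intro x
  have key : r x * (1 - F (x - y)) ≤ r (x - 2*y) * (1 - F (x - 2*y + y)) + 2*y*L := by
    have hF : 0 ≤ 1 - F (x - y) ∧ 1 - F (x - y) ≤ 1 := by
      constructor <;> linarith [(hF01 (x - y)).1, (hF01 (x - y)).2]
    have hlip := hLip x (x - 2*y)
    have : |x - (x - 2*y)| = 2*y := by
      rw [abs_of_nonneg] <;> [ring; linarith]
    rw [this] at hlip
    have hdiff : r x - r (x - 2*y) ≤ 2*y*L := by
      have := abs_le.mp hlip
      nlinarith [this.2]
    have heq : x - 2*y + y = x - y := by ring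
    rw [heq]
    nlinarith [hF.1, hF.2, mul_le_mul_of_nonneg_right hdiff hF.1, mul_nonneg (mul_nonneg (by norm_num : (0:ℝ) ≤ 2) hy) hL]
  rw [add_comm]
  refine key.trans (add_le_add ?_ le_rfl)
  exact le_ciSup hbdd (x - 2*y)
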